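/- For any integer p ≥ 2 and any string t of length n, the sum of the exponents of all cubic runs of t whose minimal period is at least p is less than 12n/p. -/

import Mathlib

/-- `p` is a period of the substring `t[i..j]` of the 1-indexed string `t`:
`1 ≤ p ≤ |t[i..j]| = j - i + 1`, and `t[k] = t[k + p]` whenever both positions
lie in `[i..j]` (vacuously, the length is always a period). -/
def IsPeriodOf {α : Type*} (t : ℕ → α) (i j p : ℕ) : Prop :=
  1 ≤ p ∧ p ≤ j + 1 - i ∧ ∀ k, i ≤ k → k + p ≤ j → t (k + p) = t k

/-- The minimal period of the substring `t[i..j]`. -/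
noncomputable def minPeriod {α : Type*} (t : ℕ → α) (i j : ℕ) : ℕ :=
  sInf {p | IsPeriodOf t i j p}

/-- `t[i..j]` is a run of the string `t[1..n]`: its exponent is at least `2`
(i.e. `j - i + 1 ≥ 2 · minPeriod`), and the extensions `t[i-1..j]` (if `i > 1`)
and `t[i..j+1]` (if `j < n`) have strictly larger minimal periods. -/
def IsRun {α : Type*} (t : ℕ → α) (n i j : ℕ) : Prop :=
  1 ≤ i ∧ i ≤ j ∧ j ≤ n ∧
  2 * minPeriod t i j ≤ j + 1 - i ∧
  (1 < i → minPeriod t i j < minPeriod t (i - 1) j) ∧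
  (j < n → minPeriod t i j < minPeriod t i (j + 1))

/-- A cubic run is a run of exponent at least `3`. -/
def IsCubicRun {α : Type*} (t : ℕ → α) (n i j : ℕ) : Prop :=
  IsRun t n i j ∧ 3 * minPeriod t i j ≤ j + 1 - i

section Lemmas
variable {α : Type*}

lemma isPeriodOf_len (t : ℕ → α) {i j : ℕ} (h : i ≤ j) : IsPeriodOf t i j (j + 1 - i) :=
  ⟨by omega, le_rfl, fun k hk hk2 => absurd hk2 (by omega)⟩

lemma minPeriod_mem (t : ℕ → α) {i j : ℕ} (h : i ≤ j) : IsPeriodOf t i j (minPeriod t i j) :=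
  Nat.sInf_mem (⟨j + 1 - i, isPeriodOf_len t h⟩ : {p | IsPeriodOf t i j p}.Nonempty)

lemma minPeriod_le (t : ℕ → α) {i j q : ℕ} (h : IsPeriodOf t i j q) : minPeriod t i j ≤ q :=
  Nat.sInf_le h

lemma period_restrict {t : ℕ → α} {i j q a b : ℕ} (h : IsPeriodOf t i j q)
    (ha : i ≤ a) (hb : b ≤ j) (hab : a + q ≤ b + 1) : IsPeriodOf t a b q :=
  ⟨h.1, by have := h.1; omega, fun k hk hk2 => h.2.2 k (by omega) (by omega)⟩

lemma period_iterate {t : ℕ → α} {i j q : ℕ} (h : IsPeriodOf t i j q) :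
    ∀ (m k : ℕ), i ≤ k → k + m * q ≤ j → t (k + m * q) = t k := by
  intro m
  induction m with
  | zero => intro k _ _; simp
  | succ m ih =>
    intro k hk hk2
    have hs : (m + 1) * q = m * q + q := by ring
    rw [hs] at hk2 ⊢
    set M := m * q with hM
    have h1 : t (k + M + q) = t (k + M) := h.2.2 _ (by omega) (by omega)
    have h2 : t (k + M) = t k := ih k hk (by omega)
    rw [← Nat.add_assoc, h1, h2]

lemma period_glue {t : ℕ → α} {i1 j1 i2 j2 q : ℕ}
    (h1 : IsPeriodOf t i1 j1 q) (h2 : IsPeriodOf t i2 j2 q)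
    (hi : i1 ≤ i2) (hov : i2 + q ≤ j1 + 1) (hj : j1 ≤ j2) : IsPeriodOf t i1 j2 q := by
  refine ⟨h1.1, by have := h1.2.1; have := h1.1; omega, ?_⟩
  intro k hk hkq
  rcases le_or_gt (k + q) j1 with h | h
  · exact h1.2.2 k hk h
  · exact h2.2.2 k (by omega) hkq

lemma period_propagate {t : ℕ → α} {i2 j2 a b q1 q2 : ℕ}
    (h2 : IsPeriodOf t i2 j2 q2) (ha : i2 ≤ a) (hb : b ≤ j2)
    (h1 : IsPeriodOf t a b q1) (hlen : a + q1 + q2 ≤ b + 1) :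
    IsPeriodOf t i2 j2 q1 := by
  have hq1 : 1 ≤ q1 := h1.1
  have hq2 : 1 ≤ q2 := h2.1
  refine ⟨hq1, by omega, ?_⟩
  intro k hk hkq
  have hr := Nat.div_add_mod (k + q2 * a - a) q2
  set d := (k + q2 * a - a) / q2 with hd
  set r := (k + q2 * a - a) % q2 with hrr
  have hrlt : r < q2 := Nat.mod_lt _ (by omega)
  have hca : a ≤ k + q2 * a := by
    have : a ≤ q2 * a := Nat.le_mul_of_pos_left a (by omega)
    omega
  set x := a + r with hx
  have hxb : x + q1 ≤ b := by omega
  have hkey : k + q2 * a = x + q2 * d := by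
    have h1' : x + q2 * d = a + (q2 * d + r) := by rw [hx]; ring
    rw [hr] at h1'
    rw [h1', Nat.add_sub_cancel' hca]
  rcases le_total a d with h' | h'
  · obtain ⟨D, hD⟩ : ∃ D, d = a + D := ⟨d - a, by omega⟩
    have e1 : k = x + D * q2 := by
      have hm : q2 * d = q2 * a + q2 * D := by rw [hD, Nat.mul_add]
      have h3' : (x + D * q2) + q2 * a = k + q2 * a := by
        rw [hkey, hm]; ring
      exact (Nat.add_right_cancel h3').symm
    have t1 : t k = t x := by
      rw [e1]; exact period_iterate h2 D x (by omega) (by rw [← e1]; omega)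
    have t2 : t (k + q1) = t (x + q1) := by
      have e2 : k + q1 = (x + q1) + D * q2 := by rw [e1]; ring
      rw [e2]; exact period_iterate h2 D (x + q1) (by omega) (by rw [← e2]; omega)
    have t3 : t (x + q1) = t x := h1.2.2 x (by omega) hxb
    rw [t2, t3]; exact t1.symm
  · obtain ⟨D, hD⟩ : ∃ D, a = d + D := ⟨a - d, by omega⟩
    have e1 : x = k + D * q2 := by
      have hm : q2 * a = q2 * d + q2 * D := by rw [hD, Nat.mul_add]
      have h3' : (k + D * q2) + q2 * d = x + q2 * d := by
        rw [← hkey, hm]; ring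
      exact (Nat.add_right_cancel h3').symm
    have t1 : t x = t k := by
      rw [e1]; exact period_iterate h2 D k hk (by rw [← e1]; omega)
    have t2 : t (x + q1) = t (k + q1) := by
      have e2 : x + q1 = (k + q1) + D * q2 := by rw [e1]; ring
      rw [e2]; exact period_iterate h2 D (k + q1) (by omega) (by rw [← e2]; omega)
    have t3 : t (x + q1) = t x := h1.2.2 x (by omega) hxb
    rw [← t2, t3]; exact t1



lemma run_overlap_false {t : ℕ → α} {n i1 j1 i2 j2 : ℕ}
    (hr1 : IsRun t n i1 j1) (hr2 : IsRun t n i2 j2) (hne : ¬(i1 = i2 ∧ j1 = j2))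
    (hov : max i1 i2 + (minPeriod t i1 j1 + minPeriod t i2 j2) ≤ min j1 j2 + 1) : False := by
  obtain ⟨hi1, hij1, hjn1, hexp1, hL1, hR1⟩ := hr1
  obtain ⟨hi2, hij2, hjn2, hexp2, hL2, hR2⟩ := hr2
  set q1 := minPeriod t i1 j1 with hq1d
  set q2 := minPeriod t i2 j2 with hq2d
  have hp1 : IsPeriodOf t i1 j1 q1 := minPeriod_mem t hij1
  have hp2 : IsPeriodOf t i2 j2 q2 := minPeriod_mem t hij2
  have hq1pos : 1 ≤ q1 := hp1.1
  have hq2pos : 1 ≤ q2 := hp2.1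
  have hq1len : q1 ≤ j1 + 1 - i1 := hp1.2.1
  have hq2len : q2 ≤ j2 + 1 - i2 := hp2.2.1
  have hma1 : i1 ≤ max i1 i2 := le_max_left _ _
  have hma2 : i2 ≤ max i1 i2 := le_max_right _ _
  have hmi1 : min j1 j2 ≤ j1 := min_le_left _ _
  have hmi2 : min j1 j2 ≤ j2 := min_le_right _ _
  rcases Nat.lt_trichotomy q1 q2 with hlt | heq | hgt
  · have hW : IsPeriodOf t (max i1 i2) (min j1 j2) q1 :=
      period_restrict hp1 hma1 hmi1 (by omega)
    have hle := minPeriod_le t (period_propagate hp2 hma2 hmi2 hW (by omega))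
    omega
  · rcases Nat.lt_trichotomy j1 j2 with hj | hj | hj
    · -- j1 < j2 : contradict right-maximality of r1
      have hp2' : IsPeriodOf t i2 j2 q1 := by rw [heq]; exact hp2
      have hper : IsPeriodOf t i1 (j1 + 1) q1 := by
        rcases le_total i1 i2 with hii | hii
        · exact period_restrict (period_glue hp1 hp2' hii (by omega) (by omega))
            le_rfl (by omega) (by omega)
        · exact period_restrict hp2' hii (by omega) (by omega)
      have hle := minPeriod_le t hper
      have := hR1 (by omega)
      omega
    · -- j1 = j2 : contradict left-maximality
      have hne' : i1 ≠ i2 := fun hc => hne ⟨hc, hj⟩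
      rcases Nat.lt_or_ge i1 i2 with hii | hii
      · have hper : IsPeriodOf t (i2 - 1) j2 q1 :=
          period_restrict hp1 (by omega) (by omega) (by omega)
        have hle := minPeriod_le t hper
        have := hL2 (by omega)
        omega
      · have hp2' : IsPeriodOf t i2 j2 q1 := by rw [heq]; exact hp2
        have hper : IsPeriodOf t (i1 - 1) j1 q1 :=
          period_restrict hp2' (by omega) (by omega) (by omega)
        have hle := minPeriod_le t hper
        have := hL1 (by omega)
        omega
    · -- j2 < j1 : contradict right-maximality of r2
      have hp2' : IsPeriodOf t i2 j2 q1 := by rw [heq]; exact hp2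
      have hper : IsPeriodOf t i2 (j2 + 1) q1 := by
        rcases le_total i2 i1 with hii | hii
        · exact period_restrict (period_glue hp2' hp1 hii (by omega) (by omega))
            le_rfl (by omega) (by omega)
        · exact period_restrict hp1 hii (by omega) (by omega)
      have hle := minPeriod_le t hper
      have := hR2 (by omega)
      omega
  · have hW : IsPeriodOf t (max i1 i2) (min j1 j2) q2 :=
      period_restrict hp2 hma2 hmi2 (by omega)
    have hle := minPeriod_le t (period_propagate hp1 hma1 hmi1 hW (by omega))
    omega

lemma bucket_sep {t : ℕ → α} {n i1 j1 i2 j2 Q : ℕ}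
    (hc1 : IsCubicRun t n i1 j1) (hc2 : IsCubicRun t n i2 j2)
    (hne : ¬(i1 = i2 ∧ j1 = j2))
    (hQ1 : Q ≤ minPeriod t i1 j1) (hQ1' : minPeriod t i1 j1 < 2 * Q)
    (hQ2 : Q ≤ minPeriod t i2 j2) (hQ2' : minPeriod t i2 j2 < 2 * Q) :
    i1 ≠ i2 ∧ (i1 < i2 → j1 + 2 ≤ i2 + minPeriod t i1 j1 + minPeriod t i2 j2) := by
  obtain ⟨hr1, hcube1⟩ := hc1
  obtain ⟨hr2, hcube2⟩ := hc2
  have hij1 : i1 ≤ j1 := hr1.2.1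
  have hij2 : i2 ≤ j2 := hr2.2.1
  set q1 := minPeriod t i1 j1 with hq1d
  set q2 := minPeriod t i2 j2 with hq2d
  constructor
  · intro hii
    exact run_overlap_false hr1 hr2 hne (by omega)
  · intro hii
    by_contra hcon
    push_neg at hcon
    exact run_overlap_false hr1 hr2 hne (by omega)


lemma chain_aux (n : ℕ) (w : ℕ × ℕ → ℕ) :
    ∀ (k : ℕ) (R : Finset (ℕ × ℕ)), R.card ≤ k →
    (∀ r ∈ R, 1 ≤ r.1 ∧ r.2 ≤ n ∧ 1 ≤ w r ∧ r.1 + 2 * w r ≤ r.2 + 1) →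
    (∀ r ∈ R, ∀ s ∈ R, r ≠ s → r.1 ≠ s.1) →
    (∀ r ∈ R, ∀ s ∈ R, r.1 < s.1 → r.2 + 2 ≤ s.1 + w r + w s) →
    ∀ r0 ∈ R, (∀ s ∈ R, s ≠ r0 → r0.1 < s.1) →
    (∑ r ∈ R, (r.2 + 1 - (r.1 + 2 * w r))) + (w r0 + r0.1) ≤ n + 1 := by
  intro k
  induction k with
  | zero =>
    intro R hcard _ _ _ r0 hr0 _
    exact absurd (Finset.card_pos.mpr ⟨r0, hr0⟩) (by omega)
  | succ k ih =>
    intro R hcard h1 h2 h3 r0 hr0 hmin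
    have hsum : (∑ r ∈ R.erase r0, (r.2 + 1 - (r.1 + 2 * w r))) + (r0.2 + 1 - (r0.1 + 2 * w r0))
        = ∑ r ∈ R, (r.2 + 1 - (r.1 + 2 * w r)) := Finset.sum_erase_add R _ hr0
    rcases Finset.eq_empty_or_nonempty (R.erase r0) with he | hne
    · rw [he, Finset.sum_empty, zero_add] at hsum
      obtain ⟨a1, a2, a3, a4⟩ := h1 r0 hr0
      omega
    · obtain ⟨r1, hr1, hmin1⟩ := Finset.exists_min_image (R.erase r0) Prod.fst hne
      have hr1R : r1 ∈ R := Finset.mem_of_mem_erase hr1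
      have hr1ne : r1 ≠ r0 := Finset.ne_of_mem_erase hr1
      have hstrict : ∀ s ∈ R.erase r0, s ≠ r1 → r1.1 < s.1 := by
        intro s hs hsne
        have hle := hmin1 s hs
        have := h2 r1 hr1R s (Finset.mem_of_mem_erase hs) (Ne.symm hsne)
        omega
      have hcard' : (R.erase r0).card ≤ k := by
        have h := Finset.card_erase_of_mem hr0
        have := Finset.card_pos.mpr ⟨r0, hr0⟩
        omega
      have ihapp := ih (R.erase r0) hcard'
        (fun r hr => h1 r (Finset.mem_of_mem_erase hr))
        (fun r hr s hs => h2 r (Finset.mem_of_mem_erase hr) s (Finset.mem_of_mem_erase hs))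
        (fun r hr s hs => h3 r (Finset.mem_of_mem_erase hr) s (Finset.mem_of_mem_erase hs))
        r1 hr1 hstrict
      have hlt01 : r0.1 < r1.1 := hmin r1 hr1R hr1ne
      have hh3 := h3 r0 hr0 r1 hr1R hlt01
      obtain ⟨a1, a2, a3, a4⟩ := h1 r0 hr0
      omega

lemma chain_bound (n : ℕ) (w : ℕ × ℕ → ℕ) (R : Finset (ℕ × ℕ))
    (h1 : ∀ r ∈ R, 1 ≤ r.1 ∧ r.2 ≤ n ∧ 1 ≤ w r ∧ r.1 + 2 * w r ≤ r.2 + 1)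
    (h2 : ∀ r ∈ R, ∀ s ∈ R, r ≠ s → r.1 ≠ s.1)
    (h3 : ∀ r ∈ R, ∀ s ∈ R, r.1 < s.1 → r.2 + 2 ≤ s.1 + w r + w s) :
    ∑ r ∈ R, (r.2 + 1 - (r.1 + 2 * w r)) ≤ n := by
  rcases Finset.eq_empty_or_nonempty R with he | hne
  · simp [he]
  · obtain ⟨r0, hr0, hmin⟩ := Finset.exists_min_image R Prod.fst hne
    have hstrict : ∀ s ∈ R, s ≠ r0 → r0.1 < s.1 := by
      intro s hs hsne
      have := h2 r0 hr0 s hs (Ne.symm hsne)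
      have := hmin s hs
      omega
    have happ := chain_aux n w R.card R le_rfl h1 h2 h3 r0 hr0 hstrict
    obtain ⟨a1, a2, a3, a4⟩ := h1 r0 hr0
    omega

end Lemmas

/-- For `p ≥ 2` and any string of length `n ≥ 1`, the sum of the exponents of
all cubic runs with minimal period at least `p` is less than `12n/p`. -/
theorem sum_of_exponents_of_cubic_runs {α : Type*} [LinearOrder α]
    (p n : ℕ) (hp : 2 ≤ p) (hn : 0 < n) (t : ℕ → α) :
    (∑ᶠ ij ∈ {ij : ℕ × ℕ | IsCubicRun t n ij.1 ij.2 ∧ p ≤ minPeriod t ij.1 ij.2},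
        ((ij.2 + 1 - ij.1 : ℕ) : ℝ) / (minPeriod t ij.1 ij.2 : ℝ))
      < 12 * n / p := by
  classical
  have hfin : {ij : ℕ × ℕ | IsCubicRun t n ij.1 ij.2 ∧ p ≤ minPeriod t ij.1 ij.2}.Finite := by
    apply Set.Finite.subset (Set.finite_Icc (1, 1) (n, n))
    rintro ⟨i, j⟩ ⟨⟨⟨h1, h2, h3, _⟩, _⟩, _⟩
    simp only [Set.mem_Icc, Prod.mk_le_mk]
    omega
  rw [finsum_mem_eq_finite_toFinset_sum _ hfin]
  set F := hfin.toFinset with hF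
  have hmem : ∀ r ∈ F, IsCubicRun t n r.1 r.2 ∧ p ≤ minPeriod t r.1 r.2 := by
    intro r hr; rwa [hF, Set.Finite.mem_toFinset] at hr
  have hbase : ∀ r ∈ F, 1 ≤ r.1 ∧ r.1 ≤ r.2 ∧ r.2 ≤ n ∧ 1 ≤ minPeriod t r.1 r.2 ∧
      p ≤ minPeriod t r.1 r.2 ∧ 3 * minPeriod t r.1 r.2 ≤ r.2 + 1 - r.1 := by
    intro r hr
    obtain ⟨⟨⟨h1, h2, h3, _, _, _⟩, hcube⟩, hpq⟩ := hmem r hr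
    exact ⟨h1, h2, h3, (minPeriod_mem t h2).1, hpq, hcube⟩
  have hmaps : ∀ r ∈ F, Nat.log 2 (minPeriod t r.1 r.2 / p) ∈ Finset.range (n + 1) := by
    intro r hr
    obtain ⟨h1, h2, h3, h4, h5, h6⟩ := hbase r hr
    have hd1 := Nat.log_le_self 2 (minPeriod t r.1 r.2 / p)
    have hd2 := Nat.div_le_self (minPeriod t r.1 r.2) p
    simp only [Finset.mem_range]
    omega
  rw [← Finset.sum_fiberwise_of_maps_to hmaps]
  have hbucket : ∀ m ∈ Finset.range (n + 1),
      (∑ r ∈ F.filter (fun r => Nat.log 2 (minPeriod t r.1 r.2 / p) = m),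
        ((r.2 + 1 - r.1 : ℕ) : ℝ) / (minPeriod t r.1 r.2 : ℝ))
      ≤ 3 * n / ((2 ^ m * p : ℕ) : ℝ) := by
    intro m _
    set Q := 2 ^ m * p with hQ
    have hQpos : 0 < Q := by positivity
    set G := F.filter (fun r => Nat.log 2 (minPeriod t r.1 r.2 / p) = m) with hG
    have hGF : ∀ r ∈ G, r ∈ F := fun r hr => (Finset.mem_filter.mp hr).1
    have hGQ : ∀ r ∈ G, Q ≤ minPeriod t r.1 r.2 ∧ minPeriod t r.1 r.2 < 2 * Q := by
      intro r hrG
      obtain ⟨h1, h2, h3, h4, h5, h6⟩ := hbase r (hGF r hrG)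
      have hlog := (Finset.mem_filter.mp hrG).2
      constructor
      · have h7 : 2 ^ m ≤ minPeriod t r.1 r.2 / p := by
          rw [← hlog]; exact Nat.pow_log_le_self 2 (by
            have : 1 ≤ minPeriod t r.1 r.2 / p := (Nat.one_le_div_iff (by omega)).mpr h5
            omega)
        calc Q = 2 ^ m * p := hQ
          _ ≤ (minPeriod t r.1 r.2 / p) * p := Nat.mul_le_mul_right _ h7
          _ ≤ minPeriod t r.1 r.2 := Nat.div_mul_le_self _ _
      · have h8 : minPeriod t r.1 r.2 / p < 2 ^ (m + 1) := by
          rw [← hlog]; exact Nat.lt_pow_succ_log_self (by norm_num) _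
        have h9 : minPeriod t r.1 r.2 < 2 ^ (m + 1) * p :=
          (Nat.div_lt_iff_lt_mul (by omega)).mp h8
        calc minPeriod t r.1 r.2 < 2 ^ (m + 1) * p := h9
          _ = 2 * Q := by rw [hQ, pow_succ]; ring
    have hchain : ∑ r ∈ G, (r.2 + 1 - (r.1 + 2 * minPeriod t r.1 r.2)) ≤ n := by
      apply chain_bound n (fun r => minPeriod t r.1 r.2) G
      · intro r hrG
        obtain ⟨h1, h2, h3, h4, h5, h6⟩ := hbase r (hGF r hrG)
        exact ⟨h1, h3, h4, by omega⟩
      · intro r hr s hs hne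
        have hsep := bucket_sep (hmem r (hGF r hr)).1 (hmem s (hGF s hs)).1
          (by intro hc; exact hne (Prod.ext hc.1 hc.2))
          (hGQ r hr).1 (hGQ r hr).2 (hGQ s hs).1 (hGQ s hs).2
        exact hsep.1
      · intro r hr s hs hlt
        have hne : r ≠ s := by intro hc; rw [hc] at hlt; omega
        have hsep := bucket_sep (hmem r (hGF r hr)).1 (hmem s (hGF s hs)).1
          (by intro hc; exact hne (Prod.ext hc.1 hc.2))
          (hGQ r hr).1 (hGQ r hr).2 (hGQ s hs).1 (hGQ s hs).2
        exact hsep.2 hlt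
    have hpoint : ∀ r ∈ G, ((r.2 + 1 - r.1 : ℕ) : ℝ) / (minPeriod t r.1 r.2 : ℝ)
        ≤ 3 / (Q : ℝ) * ((r.2 + 1 - (r.1 + 2 * minPeriod t r.1 r.2) : ℕ) : ℝ) := by
      intro r hrG
      obtain ⟨h1, h2, h3, h4, h5, h6⟩ := hbase r (hGF r hrG)
      obtain ⟨hqQ, _⟩ := hGQ r hrG
      set q := minPeriod t r.1 r.2 with hq
      have hq0 : (0 : ℝ) < (q : ℝ) := by exact_mod_cast h4
      have hQ0 : (0 : ℝ) < (Q : ℝ) := by exact_mod_cast hQpos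
      have hnat : (r.2 + 1 - r.1) * Q ≤ 3 * (r.2 + 1 - (r.1 + 2 * q)) * q := by
        have h7 : r.2 + 1 - r.1 ≤ 3 * (r.2 + 1 - (r.1 + 2 * q)) := by omega
        calc (r.2 + 1 - r.1) * Q ≤ (r.2 + 1 - r.1) * q := Nat.mul_le_mul_left _ hqQ
          _ ≤ (3 * (r.2 + 1 - (r.1 + 2 * q))) * q := Nat.mul_le_mul_right _ h7
      have hcast : ((r.2 + 1 - r.1 : ℕ) : ℝ) * (Q : ℝ)
          ≤ 3 * ((r.2 + 1 - (r.1 + 2 * q) : ℕ) : ℝ) * (q : ℝ) := by exact_mod_cast hnat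
      rw [div_le_iff₀ hq0, div_mul_eq_mul_div, div_mul_eq_mul_div, le_div_iff₀ hQ0]
      linarith [hcast]
    calc (∑ r ∈ G, ((r.2 + 1 - r.1 : ℕ) : ℝ) / (minPeriod t r.1 r.2 : ℝ))
        ≤ ∑ r ∈ G, 3 / (Q : ℝ) * ((r.2 + 1 - (r.1 + 2 * minPeriod t r.1 r.2) : ℕ) : ℝ) :=
          Finset.sum_le_sum hpoint
      _ = 3 / (Q : ℝ) * ((∑ r ∈ G, (r.2 + 1 - (r.1 + 2 * minPeriod t r.1 r.2)) : ℕ) : ℝ) := by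
          rw [← Finset.mul_sum]; push_cast; ring
      _ ≤ 3 / (Q : ℝ) * (n : ℝ) := by
          have h0 : (0 : ℝ) ≤ 3 / (Q : ℝ) := by positivity
          have : ((∑ r ∈ G, (r.2 + 1 - (r.1 + 2 * minPeriod t r.1 r.2)) : ℕ) : ℝ) ≤ (n : ℝ) := by
            exact_mod_cast hchain
          exact mul_le_mul_of_nonneg_left this h0
      _ = 3 * n / ((Q : ℕ) : ℝ) := by ring
  have hp0 : (0 : ℝ) < (p : ℝ) := by exact_mod_cast (by omega : 0 < p)
  have hn0 : (1 : ℝ) ≤ (n : ℝ) := by exact_mod_cast hn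
  calc (∑ m ∈ Finset.range (n + 1),
        ∑ r ∈ F.filter (fun r => Nat.log 2 (minPeriod t r.1 r.2 / p) = m),
          ((r.2 + 1 - r.1 : ℕ) : ℝ) / (minPeriod t r.1 r.2 : ℝ))
      ≤ ∑ m ∈ Finset.range (n + 1), 3 * n / ((2 ^ m * p : ℕ) : ℝ) :=
        Finset.sum_le_sum hbucket
    _ = ∑ m ∈ Finset.range (n + 1), (3 * (n : ℝ) / p) * (1 / 2) ^ m := by
        apply Finset.sum_congr rfl
        intro m _
        have h2m : (0 : ℝ) < 2 ^ m := by positivity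
        push_cast
        field_simp
        rw [← mul_pow]; norm_num
    _ = (3 * (n : ℝ) / p) * ∑ m ∈ Finset.range (n + 1), (1 / 2 : ℝ) ^ m := by
        rw [Finset.mul_sum]
    _ ≤ (3 * (n : ℝ) / p) * 2 := by
        have hg := sum_geometric_two_le (n + 1)
        have h0 : (0 : ℝ) ≤ 3 * (n : ℝ) / p := by positivity
        exact mul_le_mul_of_nonneg_left hg h0
    _ < 12 * n / p := by
        rw [div_mul_eq_mul_div, div_lt_div_iff₀ hp0 hp0]
        nlinarith
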